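/- In any level of the Calkin-Wilf tree, the denominator of each fraction equals the numerator of the next fraction in that level (reading left to right). -/

import Mathlib

/-- Level `n+1` (in the paper's 1-based numbering) of the Calkin–Wilf tree:
`cwLevel 0 = [(1,1)]`, and each pair `(a,b)` is replaced by `(a,a+b), (a+b,b)`
in order to pass to the next level. -/
def cwLevel : ℕ → List (ℕ × ℕ)
  | 0 => [(1, 1)]
  | n + 1 => (cwLevel n).flatMap fun p => [(p.1, p.1 + p.2), (p.1 + p.2, p.2)]

lemma cw_step_chain (l : List (ℕ × ℕ)) (h : l.Chain' (fun p q => p.2 = q.1)) :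
    (l.flatMap fun p => [(p.1, p.1 + p.2), (p.1 + p.2, p.2)]).Chain'
      (fun p q => p.2 = q.1) := by
  induction l with
  | nil => simp [List.Chain']
  | cons a t ih =>
    cases t with
    | nil => simp [List.Chain']
    | cons b t' =>
      rw [List.Chain', List.isChain_cons_cons] at h
      have ih' := ih h.2
      simp only [List.flatMap_cons] at ih' ⊢
      simp only [List.cons_append, List.nil_append] at ih' ⊢
      rw [List.Chain', List.isChain_cons_cons, List.isChain_cons_cons, List.isChain_cons_cons]
      exact ⟨rfl, h.1, rfl, (List.isChain_cons_cons.mp ih').2⟩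

lemma cw_chain (n : ℕ) : (cwLevel n).Chain' (fun p q => p.2 = q.1) := by
  induction n with
  | zero => simp [cwLevel, List.Chain']
  | succ n ih => exact cw_step_chain _ ih

/-- In any level of the Calkin–Wilf tree, the denominator of each fraction
equals the numerator of the next fraction in that level. -/
theorem cw_denom_eq_next_num (n i : ℕ) (h : i + 1 < (cwLevel n).length) :
    ((cwLevel n).getD i (0, 0)).2 = ((cwLevel n).getD (i + 1) (0, 0)).1 := by
  have hc := List.isChain_iff_getElem.mp (cw_chain n) i (by omega)
  rw [List.getD_eq_getElem _ _ (by omega), List.getD_eq_getElem _ _ h]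
  exact hc
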